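/- For a ≥ 0, b > 0 and 2b ≤ u ≤ R²/b where R = (1+a)r+b, with c_OPT = sqrt(u/b) and η₂(c) = (1 - 1/c - (b/u)(c-1))/(1+a), one has η₂(c_OPT) - η₂(c_OPT + 1) = (b/u)(1 - 1/(1 + sqrt(b/u)))/(1+a) ≤ (b/u)^(3/2)/(1+a). -/

import Mathlib

/-- For 2b ≤ u ≤ R²/b, with c_OPT = √(u/b) and
η₂(c) = (1 - 1/c - (b/u)(c-1))/(1+a), one has
η₂(c_OPT) - η₂(c_OPT+1) = (b/u)(1 - 1/(1 + √(b/u)))/(1+a) ≤ (b/u)^(3/2)/(1+a). -/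
theorem stmt5 (r u a b R : ℝ) (hr : 0 < r) (hu : 0 < u) (ha : 0 ≤ a) (hb : 0 < b)
    (hR : R = (1+a)*r + b) (h1 : 2*b ≤ u) (h2 : u ≤ R^2/b) :
    ((1 - 1/(Real.sqrt (u/b)) - (b/u)*(Real.sqrt (u/b) - 1))/(1+a)
      - (1 - 1/(Real.sqrt (u/b) + 1) - (b/u)*(Real.sqrt (u/b) + 1 - 1))/(1+a)
        = (b/u)*(1 - 1/(1 + Real.sqrt (b/u)))/(1+a)) ∧
    (b/u)*(1 - 1/(1 + Real.sqrt (b/u)))/(1+a) ≤ (b/u) ^ ((3:ℝ)/2) / (1+a) := by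
  have hub : 0 < u/b := div_pos hu hb
  have hbu : 0 < b/u := div_pos hb hu
  set s := Real.sqrt (u/b) with hs_def
  have hs : 0 < s := Real.sqrt_pos.mpr hub
  have hs2 : s^2 = u/b := Real.sq_sqrt hub.le
  have hinv : Real.sqrt (b/u) = 1/s := by
    rw [hs_def, one_div, ← Real.sqrt_inv]
    congr 1
    field_simp
  have hbus : b/u = 1/s^2 := by
    rw [hs2]; field_simp
  have ha1 : (0:ℝ) < 1 + a := by linarith
  have hs1 : s + 1 ≠ 0 := by positivity
  have ht : 0 < Real.sqrt (b/u) := Real.sqrt_pos.mpr hbu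
  constructor
  · rw [hinv, hbus]
    have h1s : 1 + 1/s ≠ 0 := by positivity
    field_simp
    ring
  · have hrpow : (b/u) ^ ((3:ℝ)/2) = (b/u) * Real.sqrt (b/u) := by
      rw [show (3:ℝ)/2 = 1 + 1/2 by norm_num, Real.rpow_add hbu, Real.rpow_one,
        Real.sqrt_eq_rpow]
    rw [hrpow]
    set t := Real.sqrt (b/u)
    have h1t : (0:ℝ) < 1 + t := by positivity
    have key : 1 - 1/(1+t) ≤ t := by
      have heq : 1 - 1/(1+t) = t/(1+t) := by field_simp; ring
      rw [heq]
      exact div_le_self ht.le (by linarith)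
    gcongr
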